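/- Let Z be a set of four points of P^1 x P^1 in multiplicity 1 generic position and let I = I(Z). Then α(I^(3)) ≤ 8 while α(I^3) = 9; in particular I^(3) is not contained in I^3, so I^(3) ≠ I^3. -/

import Mathlib

open MvPolynomial

noncomputable section

/-- The weights giving the bigrading on `k[x0,x1,y0,y1]` with
`deg x0 = deg x1 = (1,0)` and `deg y0 = deg y1 = (0,1)`. -/
def w4 : Fin 4 → ℕ × ℕ := ![(1,0), (1,0), (0,1), (0,1)]

variable (k : Type*) [Field k]

/-- `p = ((a0,a1),(b0,b1))` represents a point `[a0:a1] × [b0:b1]` of `P^1 × P^1`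
if neither pair of coordinates is identically zero. -/
def IsPtRep (p : (k × k) × (k × k)) : Prop := p.1 ≠ 0 ∧ p.2 ≠ 0

/-- Two (nonzero) vectors of `k²` define the same point of `P^1`. -/
def ProjEq (u v : k × k) : Prop := u.1 * v.2 = u.2 * v.1

/-- Two representatives define the same point of `P^1 × P^1`. -/
def PtEq (p q : (k × k) × (k × k)) : Prop := ProjEq k p.1 q.1 ∧ ProjEq k p.2 q.2

/-- The bihomogeneous ideal of the point `[a0:a1] × [b0:b1]`, namely
`(a1*x0 - a0*x1, b1*y0 - b0*y1)`. -/
def pointIdeal (p : (k × k) × (k × k)) : Ideal (MvPolynomial (Fin 4) k) :=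
  Ideal.span {C p.1.2 * X 0 - C p.1.1 * X 1, C p.2.2 * X 2 - C p.2.1 * X 3}

/-- The ideal `I(Z) = ∩ I(P_i)` of a finite tuple of points. -/
def idealOfPoints {s : ℕ} (Z : Fin s → (k × k) × (k × k)) :
    Ideal (MvPolynomial (Fin 4) k) :=
  ⨅ i, pointIdeal k (Z i)

/-- The `m`-th symbolic power `I(Z)^(m) = ∩ I(P_i)^m`. -/
def symbolicPower {s : ℕ} (Z : Fin s → (k × k) × (k × k)) (m : ℕ) :
    Ideal (MvPolynomial (Fin 4) k) :=
  ⨅ i, (pointIdeal k (Z i)) ^ m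

/-- The bigraded piece `J_(i,j)` of a bihomogeneous ideal, as a `k`-subspace. -/
def bipiece (J : Ideal (MvPolynomial (Fin 4) k)) (d : ℕ × ℕ) :
    Submodule k (MvPolynomial (Fin 4) k) :=
  (Submodule.restrictScalars k J) ⊓ (weightedHomogeneousSubmodule k w4 d)

/-- `α(J)`: the least total degree `t = i + j` in which `J` has a nonzero
bihomogeneous element of bidegree `(i,j)`. -/
def alpha (J : Ideal (MvPolynomial (Fin 4) k)) : ℕ :=
  sInf {t | ∃ F ∈ J, F ≠ 0 ∧ ∃ d : ℕ × ℕ, d.1 + d.2 = t ∧ F.IsWeightedHomogeneous w4 d}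

/-- The coordinates of a tuple of points of `P^1 × P^1`, as a point of affine `4s`-space. -/
def coordsOf {s : ℕ} (Z : Fin s → (k × k) × (k × k)) : Fin s × Fin 4 → k :=
  fun p => ![(Z p.1).1.1, (Z p.1).1.2, (Z p.1).2.1, (Z p.1).2.2] p.2

/-- The weights making `k[(P^1 × P^1)^s]` multigraded. -/
def wProd (s : ℕ) : Fin s × Fin 4 → (Fin s → ℕ × ℕ) := fun p => Pi.single p.1 (w4 p.2)

/-- `GeneralPosition k s P` says that property `P` holds for `s` general points of
`P^1 × P^1`: there is a nonempty Zariski-open subset `U` of `(P^1 × P^1)^s` (the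
complement of the zero locus of a multihomogeneous form `G` not vanishing identically)
such that `P` holds for every tuple of pairwise distinct points lying in `U`. -/
def GeneralPosition (s : ℕ) (P : (Fin s → (k × k) × (k × k)) → Prop) : Prop :=
  ∃ (G : MvPolynomial (Fin s × Fin 4) k) (d : Fin s → ℕ × ℕ),
    G.IsWeightedHomogeneous (wProd s) d ∧
    (∃ Z : Fin s → (k × k) × (k × k), (∀ i, IsPtRep k (Z i)) ∧ eval (coordsOf k Z) G ≠ 0) ∧
    ∀ Z : Fin s → (k × k) × (k × k), (∀ i, IsPtRep k (Z i)) →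
      (∀ i j, i ≠ j → ¬ PtEq k (Z i) (Z j)) →
      eval (coordsOf k Z) G ≠ 0 → P Z

/-- Distinct points in multiplicity 1 generic position: every subset `S` imposes
independent conditions in every bidegree, i.e.
`dim_k I(S)_(i,j) = max {0, (i+1)(j+1) - |S|}`. -/
def Mult1Generic {s : ℕ} (Z : Fin s → (k × k) × (k × k)) : Prop :=
  (∀ i, IsPtRep k (Z i)) ∧ (∀ i j, i ≠ j → ¬ PtEq k (Z i) (Z j)) ∧
  ∀ (S : Finset (Fin s)) (i j : ℕ),
    Module.finrank k ↥(bipiece k (⨅ a ∈ S, pointIdeal k (Z a)) (i, j))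
      = (i + 1) * (j + 1) - S.card

/-! ### Auxiliary machinery -/

section Aux

local instance gradedW4 {K : Type*} [Field K] :
    GradedAlgebra (weightedHomogeneousSubmodule K w4) :=
  weightedGradedAlgebra K w4

lemma weight_w4 (m : Fin 4 →₀ ℕ) : Finsupp.weight w4 m = (m 0 + m 1, m 2 + m 3) := by
  simp [Finsupp.weight_apply, Finsupp.sum_fintype, Fin.sum_univ_four, w4, Prod.ext_iff]

variable {K : Type*} [Field K]

/-- The ideal of polynomials all of whose monomials have degree at least `n`. -/
def lowId (K : Type*) [Field K] (n : ℕ) : Ideal (MvPolynomial (Fin 4) K) where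
  carrier := {F | ∀ m : Fin 4 →₀ ℕ, m 0 + m 1 + m 2 + m 3 < n → coeff m F = 0}
  zero_mem' := by intro m _; simp
  add_mem' := by intro a b ha hb m hm; rw [coeff_add, ha m hm, hb m hm, add_zero]
  smul_mem' := by
    intro c x hx m hm
    rw [smul_eq_mul, coeff_mul]
    refine Finset.sum_eq_zero fun p hp => ?_
    rw [Finset.HasAntidiagonal.mem_antidiagonal] at hp
    have h2 : p.2 0 + p.2 1 + p.2 2 + p.2 3 < n := by
      have := congrArg (fun f : Fin 4 →₀ ℕ => f 0 + f 1 + f 2 + f 3) hp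
      simp only [Finsupp.add_apply] at this
      omega
    rw [hx p.2 h2, mul_zero]

lemma lowId_mul_le (a b : ℕ) : lowId K a * lowId K b ≤ lowId K (a + b) := by
  rw [Ideal.mul_le]
  intro f hf g hg m hm
  rw [coeff_mul]
  refine Finset.sum_eq_zero fun p hp => ?_
  rw [Finset.HasAntidiagonal.mem_antidiagonal] at hp
  have hsum : (p.1 0 + p.1 1 + p.1 2 + p.1 3) + (p.2 0 + p.2 1 + p.2 2 + p.2 3)
      = m 0 + m 1 + m 2 + m 3 := by
    have := congrArg (fun f : Fin 4 →₀ ℕ => f 0 + f 1 + f 2 + f 3) hp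
    simp only [Finsupp.add_apply] at this
    omega
  by_cases h1 : p.1 0 + p.1 1 + p.1 2 + p.1 3 < a
  · rw [hf p.1 h1, zero_mul]
  · rw [hg p.2 (by omega), mul_zero]

lemma le_lowId_pow3 {I : Ideal (MvPolynomial (Fin 4) K)} {a : ℕ} (h : I ≤ lowId K a) :
    I ^ 3 ≤ lowId K (a + (a + a)) := by
  have h2 : I * I ≤ lowId K (a + a) := le_trans (Ideal.mul_mono h h) (lowId_mul_le a a)
  have h3 : I * (I * I) ≤ lowId K (a + (a + a)) :=
    le_trans (Ideal.mul_mono h h2) (lowId_mul_le a (a + a))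
  calc I ^ 3 = I * (I * I) := by ring
    _ ≤ lowId K (a + (a + a)) := h3

lemma homog_CX (a : K) (i : Fin 4) : IsWeightedHomogeneous w4 (C a * X i) (w4 i) := by
  have := (isWeightedHomogeneous_C w4 a).mul (isWeightedHomogeneous_X K w4 i)
  simpa using this

lemma pointIdeal_isHomog (p : (K × K) × (K × K)) :
    (pointIdeal K p).IsHomogeneous (weightedHomogeneousSubmodule K w4) := by
  apply Ideal.homogeneous_span
  intro x hx
  simp only [Set.mem_insert_iff, Set.mem_singleton_iff] at hx
  rcases hx with rfl | rfl
  · exact ⟨(1, 0), Submodule.sub_mem _ (homog_CX p.1.2 0) (homog_CX p.1.1 1)⟩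
  · exact ⟨(0, 1), Submodule.sub_mem _ (homog_CX p.2.2 2) (homog_CX p.2.1 3)⟩

lemma comp_mem {I : Ideal (MvPolynomial (Fin 4) K)}
    (hI : I.IsHomogeneous (weightedHomogeneousSubmodule K w4))
    {F : MvPolynomial (Fin 4) K} (hF : F ∈ I) (d : ℕ × ℕ) :
    weightedHomogeneousComponent w4 d F ∈ I := by
  have h2 := hI d hF
  have he : (((DirectSum.decompose (weightedHomogeneousSubmodule K w4)) F d :
      weightedHomogeneousSubmodule K w4 d) : MvPolynomial (Fin 4) K)
      = weightedHomogeneousComponent w4 d F := MvPolynomial.decompose'_apply K w4 F d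
  rwa [he] at h2

lemma fd_homogSubmodule (d : ℕ × ℕ) :
    FiniteDimensional K (weightedHomogeneousSubmodule K w4 d) := by
  have hle : weightedHomogeneousSubmodule K w4 d
      ≤ restrictTotalDegree (Fin 4) K (d.1 + d.2) := by
    intro F hF
    rw [mem_restrictTotalDegree, totalDegree]
    apply Finset.sup_le
    intro m hm
    rw [mem_support_iff] at hm
    have hw : Finsupp.weight w4 m = d := hF hm
    rw [weight_w4] at hw
    obtain ⟨h1, h2⟩ := Prod.ext_iff.mp hw
    have hs : (m.sum fun _ e => e) = m 0 + m 1 + m 2 + m 3 := by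
      rw [Finsupp.sum_fintype _ _ fun _ => rfl, Fin.sum_univ_four]
    rw [hs]
    omega
  exact Submodule.finiteDimensional_of_le hle

lemma bipiece_eq_bot {J : Ideal (MvPolynomial (Fin 4) K)} (d : ℕ × ℕ)
    (h : Module.finrank K (bipiece K J d) = 0) : bipiece K J d = ⊥ := by
  haveI := fd_homogSubmodule (K := K) d
  haveI : FiniteDimensional K (bipiece K J d) :=
    Submodule.finiteDimensional_of_le inf_le_right
  exact Submodule.finrank_eq_zero.mp h

lemma iInf_univ_pointIdeal {s : ℕ} (Z : Fin s → (K × K) × (K × K)) :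
    (⨅ a ∈ (Finset.univ : Finset (Fin s)), pointIdeal K (Z a)) = idealOfPoints K Z :=
  iInf_congr fun a => iInf_pos (Finset.mem_univ a)

lemma idealOfPoints_le_lowId (Z : Fin 4 → (K × K) × (K × K)) (hZ : Mult1Generic K Z) :
    idealOfPoints K Z ≤ lowId K 3 := by
  have hhom : (idealOfPoints K Z).IsHomogeneous (weightedHomogeneousSubmodule K w4) :=
    Ideal.IsHomogeneous.iInf fun i => pointIdeal_isHomog _
  intro F hF m hm
  set d : ℕ × ℕ := (m 0 + m 1, m 2 + m 3) with hd
  have hcoeff : coeff m F = coeff m (weightedHomogeneousComponent w4 d F) := by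
    rw [coeff_weightedHomogeneousComponent, if_pos (weight_w4 m)]
  have hmem : weightedHomogeneousComponent w4 d F ∈ bipiece K (idealOfPoints K Z) d :=
    ⟨comp_mem hhom hF d, weightedHomogeneousComponent_mem w4 F d⟩
  have key : ∀ i j : ℕ, i + j < 3 → (i + 1) * (j + 1) - 4 = 0 := by
    intro i j h
    have hi : i ≤ 2 := by omega
    have hj : j ≤ 2 := by omega
    interval_cases i <;> interval_cases j <;> omega
  have hbot : bipiece K (idealOfPoints K Z) d = ⊥ := by
    apply bipiece_eq_bot
    have h := hZ.2.2 Finset.univ (m 0 + m 1) (m 2 + m 3)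
    rw [iInf_univ_pointIdeal] at h
    rw [hd, h]
    simpa using key (m 0 + m 1) (m 2 + m 3) (by omega)
  rw [hbot, Submodule.mem_bot] at hmem
  rw [hcoeff, hmem, coeff_zero]

lemma homog_in_pow3_eq_zero (Z : Fin 4 → (K × K) × (K × K)) (hZ : Mult1Generic K Z)
    {F : MvPolynomial (Fin 4) K} {d : ℕ × ℕ} (hF : F ∈ idealOfPoints K Z ^ 3)
    (hh : F.IsWeightedHomogeneous w4 d) (hd : d.1 + d.2 ≤ 8) : F = 0 := by
  by_contra h0
  obtain ⟨m, hm⟩ := MvPolynomial.ne_zero_iff.mp h0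
  have hw : Finsupp.weight w4 m = d := hh hm
  rw [weight_w4] at hw
  obtain ⟨h1, h2⟩ := Prod.ext_iff.mp hw
  have hlow : F ∈ lowId K 9 := by
    have := le_lowId_pow3 (idealOfPoints_le_lowId Z hZ)
    exact this hF
  exact hm (hlow m (by omega))

end Aux

/-- For four points of `P^1 × P^1` in multiplicity 1 generic position,
`α(I^(3)) ≤ 8` while `α(I^3) = 9`; in particular `I^(3) ⊄ I^3`, so `I^(3) ≠ I^3`. -/
theorem four_points_third_symbolic_ne_third_power {k : Type*} [Field k] [IsAlgClosed k]
    (Z : Fin 4 → (k × k) × (k × k)) (hZ : Mult1Generic k Z) :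
    alpha k (symbolicPower k Z 3) ≤ 8 ∧
    alpha k (idealOfPoints k Z ^ 3) = 9 ∧
    ¬ symbolicPower k Z 3 ≤ idealOfPoints k Z ^ 3 ∧
    symbolicPower k Z 3 ≠ idealOfPoints k Z ^ 3 := by
  classical
  -- nonzero (1,1)-forms through each triple of the points
  have hC : ∀ i : Fin 4, ∃ f : MvPolynomial (Fin 4) k, f ≠ 0 ∧
      f.IsWeightedHomogeneous w4 (1, 1) ∧ ∀ j, j ≠ i → f ∈ pointIdeal k (Z j) := by
    intro i
    have h := hZ.2.2 (Finset.univ.erase i) 1 1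
    have hcard : (Finset.univ.erase i).card = 3 := by
      rw [Finset.card_erase_of_mem (Finset.mem_univ i)]
      simp
    rw [hcard] at h
    have hne : bipiece k (⨅ a ∈ Finset.univ.erase i, pointIdeal k (Z a)) (1, 1) ≠ ⊥ := by
      intro hbot
      rw [hbot] at h
      simp at h
    obtain ⟨f, hfmem, hf0⟩ := (Submodule.ne_bot_iff _).mp hne
    obtain ⟨hf1, hf2⟩ := Submodule.mem_inf.mp hfmem
    refine ⟨f, hf0, hf2, fun j hj => ?_⟩
    have hmem : f ∈ (⨅ a ∈ Finset.univ.erase i, pointIdeal k (Z a)) := hf1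
    exact (Submodule.mem_iInf _).mp ((Submodule.mem_iInf _).mp hmem j)
      (Finset.mem_erase.mpr ⟨hj, Finset.mem_univ j⟩)
  choose Cv hCv0 hCvh hCvmem using hC
  set F : MvPolynomial (Fin 4) k := Cv 0 * Cv 1 * Cv 2 * Cv 3 with hFdef
  have hF0 : F ≠ 0 :=
    mul_ne_zero (mul_ne_zero (mul_ne_zero (hCv0 0) (hCv0 1)) (hCv0 2)) (hCv0 3)
  have hFh : F.IsWeightedHomogeneous w4 (4, 4) := by
    have h := (((hCvh 0).mul (hCvh 1)).mul (hCvh 2)).mul (hCvh 3)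
    have e : ((1, 1) : ℕ × ℕ) + (1, 1) + (1, 1) + (1, 1) = (4, 4) := by decide
    rwa [e] at h
  have triple : ∀ (J : Ideal (MvPolynomial (Fin 4) k)) (a b c : MvPolynomial (Fin 4) k),
      a ∈ J → b ∈ J → c ∈ J → a * b * c ∈ J ^ 3 := by
    intro J a b c ha hb hc
    have h1 : a * b * c ∈ J * J * J := Ideal.mul_mem_mul (Ideal.mul_mem_mul ha hb) hc
    have h2 : J * J * J = J ^ 3 := by ring
    rwa [h2] at h1
  have hFsym : F ∈ symbolicPower k Z 3 := by
    rw [symbolicPower]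
    rw [Submodule.mem_iInf]
    intro j
    fin_cases j
    · have h3 := triple _ _ _ _ (hCvmem 1 0 (by decide)) (hCvmem 2 0 (by decide))
        (hCvmem 3 0 (by decide))
      have hE : F = Cv 0 * (Cv 1 * Cv 2 * Cv 3) := by rw [hFdef]; ring
      rw [hE]
      exact Ideal.mul_mem_left _ _ h3
    · have h3 := triple _ _ _ _ (hCvmem 0 1 (by decide)) (hCvmem 2 1 (by decide))
        (hCvmem 3 1 (by decide))
      have hE : F = Cv 1 * (Cv 0 * Cv 2 * Cv 3) := by rw [hFdef]; ring
      rw [hE]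
      exact Ideal.mul_mem_left _ _ h3
    · have h3 := triple _ _ _ _ (hCvmem 0 2 (by decide)) (hCvmem 1 2 (by decide))
        (hCvmem 3 2 (by decide))
      have hE : F = Cv 2 * (Cv 0 * Cv 1 * Cv 3) := by rw [hFdef]; ring
      rw [hE]
      exact Ideal.mul_mem_left _ _ h3
    · have h3 := triple _ _ _ _ (hCvmem 0 3 (by decide)) (hCvmem 1 3 (by decide))
        (hCvmem 2 3 (by decide))
      have hE : F = Cv 3 * (Cv 0 * Cv 1 * Cv 2) := by rw [hFdef]; ring
      rw [hE]
      exact Ideal.mul_mem_left _ _ h3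
  -- a nonzero (2,1)-form through all four points
  have hf : ∃ f : MvPolynomial (Fin 4) k, f ≠ 0 ∧
      f.IsWeightedHomogeneous w4 (2, 1) ∧ f ∈ idealOfPoints k Z := by
    have h := hZ.2.2 Finset.univ 2 1
    rw [iInf_univ_pointIdeal] at h
    simp only [Finset.card_univ, Fintype.card_fin] at h
    have hne : bipiece k (idealOfPoints k Z) (2, 1) ≠ ⊥ := by
      intro hbot
      rw [hbot] at h
      simp at h
    obtain ⟨f, hfmem, hf0⟩ := (Submodule.ne_bot_iff _).mp hne
    obtain ⟨hf1, hf2⟩ := Submodule.mem_inf.mp hfmem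
    exact ⟨f, hf0, hf2, hf1⟩
  obtain ⟨f, hf0, hfh, hfI⟩ := hf
  have hf3h : (f ^ 3).IsWeightedHomogeneous w4 (6, 3) := by
    have h := (hfh.mul hfh).mul hfh
    have e : ((2, 1) : ℕ × ℕ) + (2, 1) + (2, 1) = (6, 3) := by decide
    have hp : f ^ 3 = f * f * f := by ring
    rw [hp]
    rwa [e] at h
  have h9mem : (9 : ℕ) ∈ {t | ∃ G ∈ idealOfPoints k Z ^ 3, G ≠ 0 ∧
      ∃ d : ℕ × ℕ, d.1 + d.2 = t ∧ G.IsWeightedHomogeneous w4 d} :=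
    ⟨f ^ 3, Ideal.pow_mem_pow hfI 3, pow_ne_zero 3 hf0, (6, 3), by norm_num, hf3h⟩
  have hnot : ¬ symbolicPower k Z 3 ≤ idealOfPoints k Z ^ 3 := by
    intro hle
    exact hF0 (homog_in_pow3_eq_zero Z hZ (hle hFsym) hFh (by norm_num))
  refine ⟨?_, ?_, hnot, fun heq => hnot heq.le⟩
  · exact Nat.sInf_le ⟨F, hFsym, hF0, (4, 4), by norm_num, hFh⟩
  · refine le_antisymm (Nat.sInf_le h9mem) ?_
    refine le_csInf ⟨9, h9mem⟩ fun t ht => ?_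
    obtain ⟨G, hG, hG0, d, hd, hGh⟩ := ht
    by_contra hlt
    push_neg at hlt
    exact hG0 (homog_in_pow3_eq_zero Z hZ hG hGh (by omega))
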